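/- Let (Ω, μ) be a probability space, let (f_n)_{n≥1} be a sequence of measurable functions f_n : Ω → [0, ∞] such that C := Σ_{n≥1} ∫ f_n dμ is finite, and let ε > 0 be a real number. Then there exist a sequence of nonnegative reals (a_n)_{n≥1} with Σ_{n≥1} a_n ≤ C/ε and a measurable set W ⊆ Ω with μ(W) ≤ ε such that W contains every point ω for which there exists N with Σ_{n ≥ N} f_n(ω) > Σ_{n ≥ N} a_n. -/

import Mathlib

open MeasureTheory Filter
open scoped ENNReal NNReal

section aux

/-- Telescoping sum for an antitone `ℝ≥0∞`-valued sequence. -/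
lemma slow_conv_tele {u : ℕ → ℝ≥0∞} (hu : Antitone u) :
    ∀ N M, N ≤ M → (∑ n ∈ Finset.Ico N M, (u n - u (n + 1))) + u M = u N := by
  intro N M hNM
  induction M, hNM using Nat.le_induction with
  | base => simp
  | succ M hNM ih =>
    rw [Finset.sum_Ico_succ_top hNM, add_assoc,
      tsub_add_cancel_of_le (hu (Nat.le_succ M))]
    exact ih

end aux

/-- Measure-theoretic core of Lemma 2 (the slow-convergence covering lemma): if
`C = Σ_n ∫ f n dμ` is finite and `ε > 0`, then there are nonnegative reals `a n` with
`Σ_n a n ≤ C / ε` and a measurable set `W` of measure at most `ε` containing every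
point `ω` for which some tail of `Σ_n f n ω` exceeds the corresponding tail of `Σ_n a n`. -/
theorem slow_convergence_cover {Ω : Type*} [MeasurableSpace Ω] (μ : Measure Ω)
    [IsProbabilityMeasure μ]
    (f : ℕ → Ω → ℝ≥0∞) (hf : ∀ n, Measurable (f n))
    (C : ℝ≥0∞) (hC : C = ∑' n, ∫⁻ ω, f n ω ∂μ) (hCfin : C ≠ ⊤)
    (ε : ℝ) (hε : 0 < ε) :
    ∃ (a : ℕ → ℝ≥0) (W : Set Ω), MeasurableSet W ∧
      (∑' n, (a n : ℝ≥0∞)) ≤ C / ENNReal.ofReal ε ∧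
      μ W ≤ ENNReal.ofReal ε ∧
      ∀ ω, (∃ N, (∑' n, (a (N + n) : ℝ≥0∞)) < ∑' n, f (N + n) ω) → ω ∈ W := by
  classical
  set E : ℝ≥0∞ := ENNReal.ofReal ε with hE
  have hE0 : E ≠ 0 := (ENNReal.ofReal_pos.mpr hε).ne'
  have hEtop : E ≠ ⊤ := ENNReal.ofReal_ne_top
  have hgmeas : ∀ N : ℕ, Measurable (fun ω => ∑' n, f (N + n) ω) := fun N =>
    Measurable.ennreal_tsum (fun n => hf (N + n))
  have htail_mono : ∀ (ω) {N M : ℕ}, N ≤ M →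
      (∑' n, f (M + n) ω) ≤ ∑' n, f (N + n) ω := by
    intro ω N M hNM
    have hinj : Function.Injective (fun n : ℕ => (M - N) + n) := fun x y h => by
      simpa using h
    have := ENNReal.tsum_comp_le_tsum_of_injective hinj (fun n => f (N + n) ω)
    calc (∑' n, f (M + n) ω) = ∑' n, f (N + ((M - N) + n)) ω :=
          tsum_congr (fun n => by congr 1; omega)
      _ ≤ ∑' n, f (N + n) ω := this
  have hint : ∀ N : ℕ, ∫⁻ ω, (∑' n, f (N + n) ω) ∂μ = ∑' n, ∫⁻ ω, f (N + n) ω ∂μ :=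
    fun N => lintegral_tsum (fun n => (hf (N + n)).aemeasurable)
  have hg0 : ∫⁻ ω, (∑' n, f (0 + n) ω) ∂μ = C := by
    rw [hint 0, hC]; simp
  -- Case C = 0
  rcases eq_or_ne C 0 with hC0 | hC0
  · refine ⟨fun _ => 0, {ω | 0 < ∑' n, f (0 + n) ω}, ?_, ?_, ?_, ?_⟩
    · exact measurableSet_lt measurable_const (hgmeas 0)
    · simp
    · have hae : (fun ω => ∑' n, f (0 + n) ω) =ᵐ[μ] 0 :=
        (lintegral_eq_zero_iff (hgmeas 0)).mp (by rw [hg0, hC0])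
      have hzero : μ {ω | 0 < ∑' n, f (0 + n) ω} = 0 := by
        refine measure_eq_zero_iff_ae_notMem.mpr ?_
        filter_upwards [hae] with ω hω
        intro hmem
        have h1 : (0 : ℝ≥0∞) < ∑' n, f (0 + n) ω := hmem
        have h2 : (∑' n, f (0 + n) ω) = 0 := hω
        rw [h2] at h1
        exact lt_irrefl 0 h1
      rw [hzero]
      exact zero_le
    · rintro ω ⟨N, hN⟩
      have h1 : (0 : ℝ≥0∞) < ∑' n, f (N + n) ω := by simpa using hN
      exact lt_of_lt_of_le h1 (htail_mono ω (Nat.zero_le N))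
  -- Main case C ≠ 0
  · set c : ℝ≥0∞ := C / E with hc
    have hc0 : c ≠ 0 := by
      rw [hc]
      intro h
      rcases ENNReal.div_eq_zero_iff.mp h with h | h
      exacts [hC0 h, hEtop h]
    have hctop : c ≠ ⊤ := by
      simp only [hc, ne_eq, ENNReal.div_eq_top]
      push_neg
      exact ⟨fun _ => hE0, fun h => absurd h hCfin⟩
    have hcE : c * E = C := ENNReal.div_mul_cancel hE0 hEtop
    -- the head set A
    set A : Set Ω := {ω | c < ∑' n, f (0 + n) ω} with hA
    have hAmeas : MeasurableSet A := measurableSet_lt measurable_const (hgmeas 0)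
    -- μ A < E
    have hμA : μ A < E := by
      by_contra hcon
      push_neg at hcon
      have hAzero : μ A = 0 := by
        have hsplit : ∫⁻ ω in A, (∑' n, f (0 + n) ω) ∂μ
            = (∫⁻ ω in A, ((∑' n, f (0 + n) ω) - c) ∂μ) + c * μ A := by
          have hcongr : ∫⁻ ω in A, (∑' n, f (0 + n) ω) ∂μ
              = ∫⁻ ω in A, (((∑' n, f (0 + n) ω) - c) + c) ∂μ := by
            refine setLIntegral_congr_fun hAmeas ?_
            intro ω hω
            exact (tsub_add_cancel_of_le (le_of_lt hω)).symm
          rw [hcongr, lintegral_add_right _ measurable_const, setLIntegral_const]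
        have hle1 : ∫⁻ ω in A, (∑' n, f (0 + n) ω) ∂μ ≤ C := by
          rw [← hg0]; exact setLIntegral_le_lintegral _ _
        have hCle : C ≤ c * μ A := by
          calc C = c * E := hcE.symm
            _ ≤ c * μ A := mul_le_mul_right hcon c
        have hzero : ∫⁻ ω in A, ((∑' n, f (0 + n) ω) - c) ∂μ = 0 := by
          have h2 : (∫⁻ ω in A, ((∑' n, f (0 + n) ω) - c) ∂μ) + c * μ A ≤ 0 + c * μ A := by
            rw [← hsplit, zero_add]
            exact hle1.trans hCle
          have hfin : c * μ A ≠ ⊤ :=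
            ENNReal.mul_ne_top hctop (measure_ne_top μ A)
          simpa using ENNReal.le_of_add_le_add_right hfin h2
        have hae := (setLIntegral_eq_zero_iff hAmeas ((hgmeas 0).sub measurable_const)).mp hzero
        refine measure_eq_zero_iff_ae_notMem.mpr ?_
        filter_upwards [hae] with ω hω
        intro hmem
        have hlt : c < ∑' n, f (0 + n) ω := hmem
        have hpos : 0 < (∑' n, f (0 + n) ω) - c := tsub_pos_of_lt hlt
        have heq : (∑' n, f (0 + n) ω) - c = 0 := hω hmem
        rw [heq] at hpos
        exact lt_irrefl 0 hpos
      rw [hAzero] at hcon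
      exact hE0 (le_zero_iff.mp hcon)
    set δ : ℝ≥0∞ := E - μ A with hδ
    have hδ0 : δ ≠ 0 := (tsub_pos_of_lt hμA).ne'
    -- the geometric thresholds
    set s : ℕ → ℝ≥0∞ := fun k => c * 2⁻¹ ^ k with hs
    have hs0 : ∀ k, s k ≠ 0 := fun k =>
      mul_ne_zero hc0 (pow_ne_zero k (by simp))
    have hhalf : (2⁻¹ : ℝ≥0∞) ≤ 1 := ENNReal.inv_le_one.mpr one_le_two
    have hstop : ∀ k, s k ≠ ⊤ := fun k =>
      ENNReal.mul_ne_top hctop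
        (ne_top_of_le_ne_top ENNReal.one_ne_top (pow_le_one₀ zero_le hhalf))
    -- the tails of the integrals tend to 0
    have hRtendsto : Tendsto (fun N => ∑' n, ∫⁻ ω, f (N + n) ω ∂μ) atTop (nhds 0) := by
      have h := ENNReal.tendsto_sum_nat_add (fun n => ∫⁻ ω, f n ω ∂μ) (by rw [← hC]; exact hCfin)
      refine h.congr (fun N => ?_)
      congr 1; funext n; rw [Nat.add_comm n N]
    -- choose cut points
    have hMex : ∀ k : ℕ, ∃ M, ∀ n ≥ M, (∑' m, ∫⁻ ω, f (n + m) ω ∂μ) ≤ s k * (δ * 2⁻¹ ^ k) := by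
      intro k
      have hbpos : 0 < s k * (δ * 2⁻¹ ^ k) := by
        refine lt_of_le_of_ne zero_le (Ne.symm ?_)
        exact mul_ne_zero (hs0 k) (mul_ne_zero hδ0 (pow_ne_zero k (by simp)))
      rcases Filter.eventually_atTop.mp (hRtendsto.eventually_lt_const hbpos) with ⟨M, hM⟩
      exact ⟨M, fun n hn => (hM n hn).le⟩
    choose M hM using hMex
    -- strictly increasing sequence of indices
    set Ns : ℕ → ℕ := fun k => Nat.rec 0 (fun k ih => max (ih + 1) (M (k + 1))) k with hNs
    have hNs0 : Ns 0 = 0 := rfl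
    have hNssucc : ∀ k, Ns (k + 1) = max (Ns k + 1) (M (k + 1)) := fun k => rfl
    have hNsmono : StrictMono Ns := strictMono_nat_of_lt_succ (fun k => by
      rw [hNssucc]; exact lt_of_lt_of_le (Nat.lt_succ_self _) (le_max_left _ _))
    have hNsbound : ∀ k, (∑' m, ∫⁻ ω, f (Ns (k + 1) + m) ω ∂μ)
        ≤ s (k + 1) * (δ * 2⁻¹ ^ (k + 1)) := by
      intro k
      exact hM (k + 1) (Ns (k + 1)) (by rw [hNssucc]; exact le_max_right _ _)
    -- the block index function
    set kOf : ℕ → ℕ := fun n => Nat.findGreatest (fun k => Ns k ≤ n) n with hkOf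
    have hkOf_spec : ∀ n, Ns (kOf n) ≤ n := by
      intro n
      have h := Nat.findGreatest_spec (P := fun k => Ns k ≤ n) (Nat.zero_le n)
        (by simp [hNs0])
      exact h
    have hkOf_ge : ∀ k n, Ns k ≤ n → k ≤ kOf n := by
      intro k n hk
      exact Nat.le_findGreatest (P := fun k => Ns k ≤ n) (le_trans (hNsmono.le_apply) hk) hk
    have hkOf_mono : Monotone kOf := by
      intro m n hmn
      exact hkOf_ge (kOf m) n (le_trans (hkOf_spec m) hmn)
    have hkOf_zero : kOf 0 = 0 := by
      have h : kOf 0 ≤ 0 := Nat.findGreatest_le (P := fun k => Ns k ≤ 0) 0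
      omega
    have hkOf_Ns : ∀ k, k ≤ kOf (Ns k) := fun k => hkOf_ge k (Ns k) le_rfl
    -- the decreasing thresholds and the sequence a
    set u : ℕ → ℝ≥0∞ := fun n => c * 2⁻¹ ^ (kOf n) with hu
    have hu_antitone : Antitone u := by
      intro m n hmn
      exact mul_le_mul_right (pow_le_pow_of_le_one zero_le
        (ENNReal.inv_le_one.mpr (by norm_num)) (hkOf_mono hmn)) c
    have hu_le : ∀ n, u n ≤ c := by
      intro n
      calc u n ≤ c * 2⁻¹ ^ 0 := mul_le_mul_right (pow_le_pow_of_le_one zero_le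
            (ENNReal.inv_le_one.mpr (by norm_num)) (Nat.zero_le _)) c
        _ = c := by simp
    have hu_top : ∀ n, u n ≠ ⊤ := fun n => ne_top_of_le_ne_top hctop (hu_le n)
    have hu0 : u 0 = c := by rw [hu]; simp [hkOf_zero]
    set a : ℕ → ℝ≥0 := fun n => (u n - u (n + 1)).toNNReal with ha
    have ha_coe : ∀ n, (a n : ℝ≥0∞) = u n - u (n + 1) := fun n =>
      ENNReal.coe_toNNReal (ne_top_of_le_ne_top (hu_top n) (tsub_le_self))
    -- partial sums of a telescope
    have htele : ∀ N MM, N ≤ MM → (∑ n ∈ Finset.Ico N MM, (a n : ℝ≥0∞)) + u MM = u N := by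
      intro N MM h
      have := slow_conv_tele hu_antitone N MM h
      rw [← this]
      congr 1
      exact Finset.sum_congr rfl (fun n _ => ha_coe n)
    -- total sum bound
    have hsum_le : (∑' n, (a n : ℝ≥0∞)) ≤ c := by
      rw [ENNReal.tsum_eq_iSup_sum]
      refine iSup_le (fun sfin => ?_)
      rcases Finset.exists_nat_subset_range sfin with ⟨MM, hMM⟩
      calc ∑ i ∈ sfin, (a i : ℝ≥0∞) ≤ ∑ i ∈ Finset.range MM, (a i : ℝ≥0∞) :=
            Finset.sum_le_sum_of_subset hMM
        _ ≤ (∑ i ∈ Finset.Ico 0 MM, (a i : ℝ≥0∞)) + u MM := by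
            rw [Finset.range_eq_Ico]; exact le_add_right le_rfl
        _ = u 0 := htele 0 MM (Nat.zero_le MM)
        _ = c := hu0
    -- tail lower bound: u N ≤ Σ_{n} a (N + n)
    have htail_ge : ∀ N, u N ≤ ∑' n, (a (N + n) : ℝ≥0∞) := by
      intro N
      have key : ∀ k : ℕ, u N ≤ (∑' n, (a (N + n) : ℝ≥0∞)) + c * 2⁻¹ ^ k := by
        intro k
        set MM := max N (Ns k) with hMM
        have hNM : N ≤ MM := le_max_left _ _
        have h1 : (∑ n ∈ Finset.Ico N MM, (a n : ℝ≥0∞)) ≤ ∑' n, (a (N + n) : ℝ≥0∞) := by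
          rw [Finset.sum_Ico_eq_sum_range]
          exact ENNReal.sum_le_tsum _
        have h2 : u MM ≤ c * 2⁻¹ ^ k := by
          have hk : k ≤ kOf MM := le_trans (hkOf_Ns k) (hkOf_mono (le_max_right _ _))
          exact mul_le_mul_right (pow_le_pow_of_le_one zero_le
            (ENNReal.inv_le_one.mpr (by norm_num)) hk) c
        calc u N = (∑ n ∈ Finset.Ico N MM, (a n : ℝ≥0∞)) + u MM := (htele N MM hNM).symm
          _ ≤ (∑' n, (a (N + n) : ℝ≥0∞)) + c * 2⁻¹ ^ k := add_le_add h1 h2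
      have hlim : Tendsto (fun k : ℕ => (∑' n, (a (N + n) : ℝ≥0∞)) + c * 2⁻¹ ^ k) atTop
          (nhds ((∑' n, (a (N + n) : ℝ≥0∞)) + 0)) := by
        refine Filter.Tendsto.const_add _ ?_
        have hpow : Tendsto (fun k : ℕ => (2⁻¹ : ℝ≥0∞) ^ k) atTop (nhds 0) :=
          ENNReal.tendsto_pow_atTop_nhds_zero_of_lt_one (by
            rw [ENNReal.inv_lt_one]; norm_num)
        simpa using ENNReal.Tendsto.const_mul hpow (Or.inr hctop)
      have := ge_of_tendsto' hlim key
      simpa using this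
    -- the covering set W
    set B : ℕ → Set Ω := fun k => {ω | s (k + 1) < ∑' n, f (Ns (k + 1) + n) ω} with hB
    have hBmeas : ∀ k, MeasurableSet (B k) := fun k =>
      measurableSet_lt measurable_const (hgmeas (Ns (k + 1)))
    have hBμ : ∀ k, μ (B k) ≤ δ * 2⁻¹ ^ (k + 1) := by
      intro k
      have hsub : B k ⊆ {ω | s (k + 1) ≤ ∑' n, f (Ns (k + 1) + n) ω} :=
        Set.setOf_subset_setOf.mpr (fun ω hω => le_of_lt hω)
      have hmark := meas_ge_le_lintegral_div (μ := μ) (hgmeas (Ns (k + 1))).aemeasurable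
        (hs0 (k + 1)) (hstop (k + 1))
      refine le_trans (measure_mono hsub) (le_trans hmark ?_)
      rw [hint]
      rw [ENNReal.div_le_iff_le_mul (Or.inl (hs0 (k+1))) (Or.inl (hstop (k+1)))]
      calc (∑' n, ∫⁻ ω, f (Ns (k + 1) + n) ω ∂μ) ≤ s (k + 1) * (δ * 2⁻¹ ^ (k + 1)) :=
            hNsbound k
        _ = δ * 2⁻¹ ^ (k + 1) * s (k + 1) := by ring
    refine ⟨a, A ∪ ⋃ k, B k, ?_, ?_, ?_, ?_⟩
    · exact hAmeas.union (MeasurableSet.iUnion hBmeas)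
    · exact hsum_le
    · -- measure bound
      have h1 : μ (A ∪ ⋃ k, B k) ≤ μ A + ∑' k, μ (B k) :=
        le_trans (measure_union_le _ _) (add_le_add_right (measure_iUnion_le B) _)
      have h2 : (∑' k, μ (B k)) ≤ δ := by
        calc (∑' k, μ (B k)) ≤ ∑' k, δ * 2⁻¹ ^ (k + 1) := ENNReal.tsum_le_tsum hBμ
          _ = δ * 2⁻¹ * ∑' k, 2⁻¹ ^ k := by
              rw [← ENNReal.tsum_mul_left]
              congr 1; funext k; ring
          _ = δ * (2⁻¹ * 2) := by
              rw [ENNReal.tsum_geometric, ENNReal.one_sub_inv_two, inv_inv, mul_assoc]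
          _ = δ := by
              rw [ENNReal.inv_mul_cancel (by norm_num) (by norm_num), mul_one]
      calc μ (A ∪ ⋃ k, B k) ≤ μ A + δ := le_trans h1 (add_le_add_right h2 _)
        _ = E := add_tsub_cancel_of_le hμA.le
    · -- containment
      intro ω hω
      by_contra hnot
      simp only [Set.mem_union, Set.mem_iUnion, not_or, not_exists] at hnot
      obtain ⟨hnA, hnB⟩ := hnot
      rcases hω with ⟨N, hN⟩
      -- show the tail at N is at most u N
      have hbound : (∑' n, f (N + n) ω) ≤ u N := by
        rcases Nat.eq_zero_or_eq_succ_pred (kOf N) with h0 | hsucc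
        · have hmono : (∑' n, f (N + n) ω) ≤ ∑' n, f (0 + n) ω := htail_mono ω (Nat.zero_le N)
          have hgA : (∑' n, f (0 + n) ω) ≤ c := not_lt.mp hnA
          have huN : u N = c := by
            show c * 2⁻¹ ^ (kOf N) = c
            rw [h0, pow_zero, mul_one]
          rw [huN]
          exact le_trans hmono hgA
        · set k := (kOf N) - 1 with hk
          have hkOfN : kOf N = k + 1 := by omega
          have hNsle : Ns (k + 1) ≤ N := by rw [← hkOfN]; exact hkOf_spec N
          have h1 : (∑' n, f (N + n) ω) ≤ ∑' n, f (Ns (k + 1) + n) ω :=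
            htail_mono ω hNsle
          have h2 : (∑' n, f (Ns (k + 1) + n) ω) ≤ s (k + 1) := not_lt.mp (hnB k)
          have huN : u N = s (k + 1) := by
            show c * 2⁻¹ ^ (kOf N) = s (k + 1)
            rw [hkOfN]
          rw [huN]
          exact le_trans h1 h2
      exact absurd hN (not_lt.mpr (le_trans hbound (htail_ge N)))
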